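/- arXiv:1509.05712 — 6 statements merged into one kernel-verified Lean document; each statement's English description precedes it below -/
import Mathlib

section
/- Let L > 0 and ν > 0. Let m : ℝ → ℝ³ be twice continuously differentiable on [0, L] with ‖m(x)‖₂ = 1 for all x ∈ [0, L] and satisfying the Neumann boundary conditions m′(0) = m′(L) = 0. Then m satisfies the equilibrium equation m(x) × m″(x) − ν · (m(x) × (m(x) × m″(x))) = 0 for all x ∈ [0, L] if and only if m is constant on [0, L], i.e. there exists a ∈ ℝ³ with ‖a‖₂ = 1 such that m(x) = a for all x ∈ [0, L]. -/
open Matrix Set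

lemma LL_triple (u v : Fin 3 → ℝ) :
    u ⨯₃ (u ⨯₃ v) = (u ⬝ᵥ v) • u - (u ⬝ᵥ u) • v := by
  ext i
  fin_cases i <;>
    simp [crossProduct, dotProduct, Fin.sum_univ_three] <;> ring

/-- The equilibria of the Landau–Lifshitz equation on `[0, L]` with Neumann boundary
conditions and saturation constraint `‖m(x)‖₂ = 1` are exactly the constant maps
`m(x) = a` with `‖a‖₂ = 1`. -/
theorem landau_lifshitz_equilibria (L ν : ℝ) (hL : 0 < L) (hν : 0 < ν)
    (m m' m'' : ℝ → Fin 3 → ℝ)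
    (hm : ∀ x ∈ Icc (0 : ℝ) L, HasDerivWithinAt m (m' x) (Icc (0 : ℝ) L) x)
    (hm' : ∀ x ∈ Icc (0 : ℝ) L, HasDerivWithinAt m' (m'' x) (Icc (0 : ℝ) L) x)
    (hm'' : ContinuousOn m'' (Icc (0 : ℝ) L))
    (hnorm : ∀ x ∈ Icc (0 : ℝ) L, Real.sqrt (∑ i, m x i ^ 2) = 1)
    (hbc0 : m' 0 = 0) (hbcL : m' L = 0) :
    (∀ x ∈ Icc (0 : ℝ) L,
        (m x) ⨯₃ (m'' x) - ν • ((m x) ⨯₃ ((m x) ⨯₃ (m'' x))) = 0)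
      ↔ ∃ a : Fin 3 → ℝ, Real.sqrt (∑ i, a i ^ 2) = 1 ∧ ∀ x ∈ Icc (0 : ℝ) L, m x = a := by
  set s : Set ℝ := Icc (0 : ℝ) L with hs
  have hu : UniqueDiffOn ℝ s := uniqueDiffOn_Icc hL
  have hconv : Convex ℝ s := convex_Icc 0 L
  have h0s : (0 : ℝ) ∈ s := ⟨le_refl 0, hL.le⟩
  constructor
  · intro heq
    -- ‖m‖² = 1 on s
    have h1 : ∀ x ∈ s, ∑ i, m x i * m x i = 1 := by
      intro x hx
      have h := hnorm x hx
      have hnn : (0 : ℝ) ≤ ∑ i, m x i ^ 2 :=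
        Finset.sum_nonneg fun i _ => sq_nonneg _
      have := Real.sq_sqrt hnn
      rw [h] at this
      simpa [pow_two] using this.symm
    -- m ⬝ m' = 0 on s
    have hdot1 : ∀ x ∈ s, ∑ i, m x i * m' x i = 0 := by
      intro x hx
      have hgd : HasDerivWithinAt (fun y => ∑ i, m y i * m y i)
          (∑ i, (m' x i * m x i + m x i * m' x i)) s x := by
        apply HasDerivWithinAt.fun_sum
        intro i _
        exact ((hasDerivWithinAt_pi.1 (hm x hx)) i).mul
          ((hasDerivWithinAt_pi.1 (hm x hx)) i)
      have hgc : HasDerivWithinAt (fun y => ∑ i, m y i * m y i) 0 s x :=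
        (hasDerivWithinAt_const x s (1 : ℝ)).congr
          (fun y hy => h1 y hy) (h1 x hx)
      have huniq : (∑ i, (m' x i * m x i + m x i * m' x i)) = 0 := by
        rw [← hgd.derivWithin (hu x hx), hgc.derivWithin (hu x hx)]
      have hsum : (∑ i, (m' x i * m x i + m x i * m' x i))
          = 2 * ∑ i, m x i * m' x i := by
        rw [Finset.sum_add_distrib, Finset.mul_sum, ← Finset.sum_add_distrib]
        apply Finset.sum_congr rfl
        intro i _; ring
      rw [hsum] at huniq
      linarith
    -- m ⨯₃ m'' = 0 on s
    have hcz : ∀ x ∈ s, m x ⨯₃ m'' x = 0 := by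
      intro x hx
      set c : Fin 3 → ℝ := m x ⨯₃ m'' x with hc
      have hce : c = ν • (m x ⨯₃ c) := by
        have := heq x hx
        have := sub_eq_zero.1 this
        simpa [hc] using this
      have hdz : c ⬝ᵥ c = 0 := by
        calc c ⬝ᵥ c = c ⬝ᵥ (ν • (m x ⨯₃ c)) := by rw [← hce]
        _ = ν * (c ⬝ᵥ (m x ⨯₃ c)) := by simp [dotProduct_smul]
        _ = 0 := by rw [dot_cross_self]; ring
      have : ∀ i, c i * c i = 0 := by
        intro i
        have hnn : ∀ j ∈ Finset.univ, (0:ℝ) ≤ c j * c j :=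
          fun j _ => mul_self_nonneg _
        exact (Finset.sum_eq_zero_iff_of_nonneg hnn).1 hdz i (Finset.mem_univ i)
      funext i
      exact mul_self_eq_zero.1 (this i)
    -- m'' parallel to m
    have hpar : ∀ x ∈ s, m'' x = (m x ⬝ᵥ m'' x) • m x := by
      intro x hx
      have ht := LL_triple (m x) (m'' x)
      rw [hcz x hx] at ht
      simp only [map_zero] at ht
      have hmm : (m x ⬝ᵥ m x) = 1 := by
        simpa [dotProduct] using h1 x hx
      rw [hmm, one_smul] at ht
      exact (sub_eq_zero.1 ht.symm).symm
    -- m' ⬝ m'' = 0 on s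
    have hdd : ∀ x ∈ s, ∑ i, m' x i * m'' x i = 0 := by
      intro x hx
      rw [hpar x hx]
      have : ∀ i, m' x i * ((m x ⬝ᵥ m'' x) • m x) i
          = (m x ⬝ᵥ m'' x) * (m x i * m' x i) := by
        intro i; simp [smul_eq_mul]; ring
      rw [Finset.sum_congr rfl (fun i _ => this i), ← Finset.mul_sum,
        hdot1 x hx, mul_zero]
    -- ‖m'‖² is constant (and zero at 0), so m' = 0 on s
    have hq : ∀ x ∈ s, m' x = 0 := by
      have hqd : ∀ x ∈ s, HasDerivWithinAt (fun y => ∑ i, m' y i * m' y i)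
          (0 : ℝ) s x := by
        intro x hx
        have hgd : HasDerivWithinAt (fun y => ∑ i, m' y i * m' y i)
            (∑ i, (m'' x i * m' x i + m' x i * m'' x i)) s x := by
          apply HasDerivWithinAt.fun_sum
          intro i _
          exact ((hasDerivWithinAt_pi.1 (hm' x hx)) i).mul
            ((hasDerivWithinAt_pi.1 (hm' x hx)) i)
        have hz : (∑ i, (m'' x i * m' x i + m' x i * m'' x i)) = 0 := by
          rw [Finset.sum_add_distrib]
          have h2 : (∑ i, m'' x i * m' x i) = ∑ i, m' x i * m'' x i := by
            apply Finset.sum_congr rfl; intro i _; ring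
          rw [h2, hdd x hx, add_zero]
        rwa [hz] at hgd
      intro x hx
      have hb := hconv.norm_image_sub_le_of_norm_hasDerivWithin_le (C := 0) hqd
        (fun y _ => by simp) h0s hx
      rw [zero_mul] at hb
      have hq0 : (∑ i, m' 0 i * m' 0 i) = 0 := by simp [hbc0]
      have hqx : (∑ i, m' x i * m' x i) = 0 := by
        have := norm_sub_eq_zero_iff.1 (le_antisymm hb (norm_nonneg _))
        rw [this, hq0]
      funext i
      have hnn : ∀ j ∈ Finset.univ, (0:ℝ) ≤ m' x j * m' x j :=
        fun j _ => mul_self_nonneg _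
      exact mul_self_eq_zero.1
        ((Finset.sum_eq_zero_iff_of_nonneg hnn).1 hqx i (Finset.mem_univ i))
    -- hence m is constant
    refine ⟨m 0, hnorm 0 h0s, fun x hx => ?_⟩
    have hb := hconv.norm_image_sub_le_of_norm_hasDerivWithin_le (C := 0) hm
      (fun y hy => by rw [hq y hy]; simp) h0s hx
    rw [zero_mul] at hb
    exact sub_eq_zero.1 (norm_eq_zero.1 (le_antisymm hb (norm_nonneg _)))
  · intro ⟨a, ha, hconst⟩ x hx
    have hm'z : ∀ y ∈ s, m' y = 0 := by
      intro y hy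
      have hconstd : HasDerivWithinAt m 0 s y :=
        (hasDerivWithinAt_const y s a).congr (fun z hz => hconst z hz) (hconst y hy)
      rw [← (hm y hy).derivWithin (hu y hy), hconstd.derivWithin (hu y hy)]
    have hm''z : m'' x = 0 := by
      have hconstd : HasDerivWithinAt m' 0 s x :=
        (hasDerivWithinAt_const x s (0 : Fin 3 → ℝ)).congr
          (fun z hz => hm'z z hz) (hm'z x hx)
      rw [← (hm' x hx).derivWithin (hu x hx), hconstd.derivWithin (hu x hx)]
    rw [hm''z]
    simp
end

section
/- Let I ⊆ ℝ be an open interval and let m : ℝ → ℝ³ be twice continuously differentiable on I with ‖m(x)‖₂ = 1 for all x ∈ I and m(x) × m″(x) = 0 for all x ∈ I. Then m″(x) = −‖m′(x)‖₂² · m(x) for all x ∈ I, and the function x ↦ ‖m′(x)‖₂² is constant on I. -/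
open Matrix Set

lemma cross_zero_aux (v w : Fin 3 → ℝ) (hv : ∑ i, v i ^ 2 = 1)
    (h : v ⨯₃ w = 0) : w = (∑ i, v i * w i) • v := by
  have h0 := congrFun h 0
  have h1 := congrFun h 1
  have h2 := congrFun h 2
  simp [crossProduct] at h0 h1 h2
  rw [Fin.sum_univ_three] at hv
  funext i
  fin_cases i <;> simp [Fin.sum_univ_three]
  · linear_combination -w 0 * hv - v 1 * h2 + v 2 * h1
  · linear_combination -w 1 * hv + v 0 * h2 - v 2 * h0
  · linear_combination -w 2 * hv - v 0 * h1 + v 1 * h0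

/-- If `‖m(x)‖₂ = 1` and `m × m″ = 0` on an open interval, then
`m″ = -‖m′‖₂² m` there and `‖m′‖₂²` is constant on the interval. -/
theorem second_deriv_parallel_of_cross_eq_zero (a b : ℝ) (m m' m'' : ℝ → Fin 3 → ℝ)
    (hm : ∀ x ∈ Ioo a b, HasDerivAt m (m' x) x)
    (hm' : ∀ x ∈ Ioo a b, HasDerivAt m' (m'' x) x)
    (hm'' : ContinuousOn m'' (Ioo a b))
    (hnorm : ∀ x ∈ Ioo a b, Real.sqrt (∑ i, m x i ^ 2) = 1)
    (hcross : ∀ x ∈ Ioo a b, (m x) ⨯₃ (m'' x) = 0) :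
    (∀ x ∈ Ioo a b, m'' x = -(∑ i, m' x i ^ 2) • m x) ∧
      (∀ x ∈ Ioo a b, ∀ y ∈ Ioo a b, ∑ i, m' x i ^ 2 = ∑ i, m' y i ^ 2) := by
  -- sum of squares equals 1
  have hsum1 : ∀ x ∈ Ioo a b, ∑ i, m x i ^ 2 = 1 := by
    intro x hx
    have h := hnorm x hx
    have hnn : (0:ℝ) ≤ ∑ i, m x i ^ 2 := Finset.sum_nonneg fun i _ => sq_nonneg _
    nlinarith [Real.sq_sqrt hnn]
  -- derivative of the squared norm of m
  have hd1 : ∀ x ∈ Ioo a b,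
      HasDerivAt (fun x => ∑ i, m x i ^ 2) (∑ i, 2 * m x i * m' x i) x := by
    intro x hx
    refine HasDerivAt.fun_sum fun i _ => ?_
    have h := (hasDerivAt_pi.1 (hm x hx)) i
    simpa [mul_comm, mul_assoc, mul_left_comm] using h.fun_pow 2
  -- that derivative is zero since the squared norm is constant 1
  have horth : ∀ x ∈ Ioo a b, ∑ i, m x i * m' x i = 0 := by
    intro x hx
    have hz : HasDerivAt (fun x => ∑ i, m x i ^ 2) 0 x := by
      have hev : (fun x => ∑ i, m x i ^ 2) =ᶠ[nhds x] fun _ => (1:ℝ) := by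
        filter_upwards [isOpen_Ioo.mem_nhds hx] with y hy using hsum1 y hy
      exact (hasDerivAt_const x (1:ℝ)).congr_of_eventuallyEq hev
    have := (hd1 x hx).unique hz
    have h2 : (2:ℝ) * ∑ i, m x i * m' x i = 0 := by
      rw [Finset.mul_sum]; rw [← this]; exact Finset.sum_congr rfl fun i _ => by ring
    linarith
  -- derivative of ∑ m m' and second orthogonality relation
  have hd2 : ∀ x ∈ Ioo a b,
      HasDerivAt (fun x => ∑ i, m x i * m' x i)
        (∑ i, (m' x i * m' x i + m x i * m'' x i)) x := by
    intro x hx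
    refine HasDerivAt.fun_sum fun i _ => ?_
    exact ((hasDerivAt_pi.1 (hm x hx)) i).mul ((hasDerivAt_pi.1 (hm' x hx)) i)
  have hkey : ∀ x ∈ Ioo a b, ∑ i, m x i * m'' x i = -(∑ i, m' x i ^ 2) := by
    intro x hx
    have hz : HasDerivAt (fun x => ∑ i, m x i * m' x i) 0 x := by
      have hev : (fun x => ∑ i, m x i * m' x i) =ᶠ[nhds x] fun _ => (0:ℝ) := by
        filter_upwards [isOpen_Ioo.mem_nhds hx] with y hy using horth y hy
      exact (hasDerivAt_const x (0:ℝ)).congr_of_eventuallyEq hev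
    have h := (hd2 x hx).unique hz
    rw [Finset.sum_add_distrib] at h
    have : ∑ i, m' x i * m' x i = ∑ i, m' x i ^ 2 :=
      Finset.sum_congr rfl fun i _ => (sq (m' x i)).symm
    linarith
  have hpar : ∀ x ∈ Ioo a b, m'' x = -(∑ i, m' x i ^ 2) • m x := by
    intro x hx
    have := cross_zero_aux (m x) (m'' x) (hsum1 x hx) (hcross x hx)
    rwa [hkey x hx] at this
  refine ⟨hpar, ?_⟩
  -- energy has zero derivative
  have hE : ∀ x ∈ Ioo a b, HasDerivAt (fun x => ∑ i, m' x i ^ 2) 0 x := by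
    intro x hx
    have hd : HasDerivAt (fun x => ∑ i, m' x i ^ 2) (∑ i, 2 * m' x i * m'' x i) x := by
      refine HasDerivAt.fun_sum fun i _ => ?_
      have h := (hasDerivAt_pi.1 (hm' x hx)) i
      simpa [mul_comm, mul_assoc, mul_left_comm] using h.fun_pow 2
    have hzero : (∑ i, 2 * m' x i * m'' x i) = 0 := by
      have hp := hpar x hx
      have : ∀ i, m'' x i = -(∑ j, m' x j ^ 2) * m x i := by
        intro i; rw [hp]; simp [mul_comm]
      have hcalc : (∑ i, 2 * m' x i * m'' x i)
          = -2 * (∑ j, m' x j ^ 2) * (∑ i, m x i * m' x i) := by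
        rw [Finset.mul_sum]
        refine Finset.sum_congr rfl fun i _ => ?_
        rw [this i]; ring
      rw [hcalc, horth x hx, mul_zero]
    rwa [hzero] at hd
  intro x hx y hy
  refine (convex_Ioo a b).is_const_of_fderivWithin_eq_zero
    (fun z hz => ((hE z hz).differentiableAt).differentiableWithinAt) (fun z hz => ?_) hx hy
  rw [fderivWithin_of_isOpen isOpen_Ioo hz, (hE z hz).hasFDerivAt.fderiv]
  ext t
  simp
end

section
/- Let L > 0, ν > 0, a ∈ ℝ³ with ‖a‖₂ = 1, and λ ∈ ℂ. Suppose v : ℝ → ℂ³ is twice continuously differentiable on [0, L], is not identically zero on [0, L], satisfies v′(0) = v′(L) = 0, and satisfies ν · v″(x) + a × v″(x) = λ · v(x) for all x ∈ [0, L]. Then there exists n ∈ ℕ such that λ = −(nπ/L)² ν, or λ = −(nπ/L)² ν + i (nπ/L)², or λ = −(nπ/L)² ν − i (nπ/L)². -/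
open Matrix Set

-- auxiliary lemmas

private lemma scalar_ode (L : ℝ) (hL : 0 < L) (μ : ℂ) (f f' : ℝ → ℂ)
    (hf : ∀ x ∈ Icc (0:ℝ) L, HasDerivWithinAt f (f' x) (Icc (0:ℝ) L) x)
    (hf' : ∀ x ∈ Icc (0:ℝ) L, HasDerivWithinAt f' (μ * f x) (Icc (0:ℝ) L) x)
    (hb0 : f' 0 = 0) (hbL : f' L = 0)
    (hx : ∃ x ∈ Icc (0:ℝ) L, f x ≠ 0) :
    ∃ n : ℕ, μ = -((((n : ℝ) * Real.pi / L : ℝ)) : ℂ) ^ 2 := by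
  obtain ⟨s, hs⟩ : ∃ s : ℂ, s ^ 2 = μ :=
    ⟨μ ^ ((2:ℕ):ℂ)⁻¹, by exact_mod_cast Complex.cpow_nat_inv_pow μ two_ne_zero⟩
  set c : ℂ := f 0 with hc
  set g : ℝ → ℂ := fun x => c * Complex.cosh (s * x) with hgdef
  set g' : ℝ → ℂ := fun x => c * (s * Complex.sinh (s * x)) with hg'def
  have hlin : ∀ x : ℝ, HasDerivAt (fun z : ℂ => s * z) s (x:ℂ) := fun x => by
    simpa using (hasDerivAt_id (x:ℂ)).const_mul s
  have hgd : ∀ x : ℝ, HasDerivAt g (g' x) x := by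
    intro x
    have h1 : HasDerivAt (fun z : ℂ => Complex.cosh (s * z))
        (Complex.sinh (s * (x:ℂ)) * s) (x:ℂ) := (Complex.hasDerivAt_cosh _).comp _ (hlin x)
    have h2 := (h1.const_mul c).comp_ofReal
    convert h2 using 1
    simp only [hg'def]; ring
  have hg'd : ∀ x : ℝ, HasDerivAt g' (μ * g x) x := by
    intro x
    have h1 : HasDerivAt (fun z : ℂ => Complex.sinh (s * z))
        (Complex.cosh (s * (x:ℂ)) * s) (x:ℂ) := (Complex.hasDerivAt_sinh _).comp _ (hlin x)
    have h2 := ((h1.const_mul s).const_mul c).comp_ofReal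
    convert h2 using 1
    simp only [hgdef, ← hs]; ring
  -- ODE uniqueness
  set T : (ℂ × ℂ) →L[ℂ] (ℂ × ℂ) :=
    (ContinuousLinearMap.snd ℂ ℂ ℂ).prod (μ • ContinuousLinearMap.fst ℂ ℂ ℂ) with hT
  have hTapp : ∀ y : ℂ × ℂ, T y = (y.2, μ * y.1) := fun y => rfl
  set F : ℝ → ℂ × ℂ := fun x => (f x, f' x) with hF
  set G : ℝ → ℂ × ℂ := fun x => (g x, g' x) with hG
  have heqon : EqOn F G (Icc 0 L) := by
    apply ODE_solution_unique_of_mem_Icc_right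
      (v := fun _ y => T y) (s := fun _ => (univ : Set (ℂ × ℂ)))
      (fun _ _ => T.lipschitz.lipschitzOnWith)
    · exact fun x hx => ((hf x hx).continuousWithinAt.prodMk (hf' x hx).continuousWithinAt)
    · intro t ht
      have hmem : Icc (0:ℝ) L ∈ nhdsWithin t (Ici t) :=
        Filter.mem_of_superset (Icc_mem_nhdsGE_of_mem ⟨le_rfl, ht.2⟩) (Icc_subset_Icc_left ht.1)
      have := ((hf t (mem_Icc_of_Ico ht)).prodMk (hf' t (mem_Icc_of_Ico ht))).mono_of_mem_nhdsWithin hmem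
      simpa [hTapp] using this
    · exact fun _ _ => mem_univ _
    · exact fun x hx => ((hgd x).continuousAt.continuousWithinAt.prodMk
        (hg'd x).continuousAt.continuousWithinAt)
    · intro t ht
      have := ((hgd t).prodMk (hg'd t)).hasDerivWithinAt (s := Ici t)
      simpa [hTapp] using this
    · exact fun _ _ => mem_univ _
    · simp [hF, hG, hgdef, hg'def, hb0, hc]
  have hc0 : c ≠ 0 := by
    intro h
    obtain ⟨x, hxI, hxne⟩ := hx
    have := congrArg Prod.fst (heqon hxI)
    simp [hF, hG, hgdef, h] at this
    exact hxne this
  have hLmem : L ∈ Icc (0:ℝ) L := ⟨hL.le, le_rfl⟩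
  have h2 := congrArg Prod.snd (heqon hLmem)
  simp only [hF, hG, hg'def] at h2
  rw [hbL] at h2
  have h3 := (mul_eq_zero.1 h2.symm).resolve_left hc0
  rcases mul_eq_zero.1 h3 with h | h
  · refine ⟨0, ?_⟩
    rw [← hs, h]
    norm_num
  · have : Complex.sin (s * L * Complex.I) = 0 := by
      rw [Complex.sin_mul_I, h, zero_mul]
    rw [Complex.sin_eq_zero_iff] at this
    obtain ⟨k, hk⟩ := this
    refine ⟨k.natAbs, ?_⟩
    have hsq : (s * (L:ℂ) * Complex.I) ^ 2 = ((k:ℂ) * (Real.pi:ℂ)) ^ 2 := by rw [hk]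
    have key : μ * (L:ℂ)^2 = -(((k:ℂ) * (Real.pi:ℂ))^2) := by
      rw [← hs]
      linear_combination (-1 : ℂ) * hsq + s^2 * (L:ℂ)^2 * Complex.I_sq
    have hn2 : ((k.natAbs : ℂ))^2 = (k:ℂ)^2 := by
      calc ((k.natAbs:ℂ))^2 = (((k.natAbs:ℤ)^2 : ℤ) : ℂ) := by norm_cast
        _ = ((k^2 : ℤ) : ℂ) := by rw [Int.natAbs_sq]
        _ = (k:ℂ)^2 := by norm_cast
    have hLc : (L:ℂ) ≠ 0 := by exact_mod_cast hL.ne'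
    push_cast
    rw [div_pow, ← neg_div, eq_div_iff (pow_ne_zero 2 hLc)]
    linear_combination key + (Real.pi:ℂ)^2 * hn2

private lemma comp_proj {s : Set ℝ} {w w' : ℝ → Fin 3 → ℂ} (i : Fin 3) {x : ℝ}
    (h : HasDerivWithinAt w (w' x) s x) :
    HasDerivWithinAt (fun t => w t i) (w' x i) s x := by
  have := ((ContinuousLinearMap.proj (R := ℝ) (φ := fun _ : Fin 3 => ℂ) i).hasFDerivAt
    (x := w x)).comp_hasDerivWithinAt x h
  exact this

private lemma proj_ode (L : ℝ) (hL : 0 < L) (lam m : ℂ) (hm : m ≠ 0) (u : Fin 3 → ℂ)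
    (v v' v'' : ℝ → Fin 3 → ℂ)
    (hv : ∀ x ∈ Icc (0:ℝ) L, HasDerivWithinAt v (v' x) (Icc (0:ℝ) L) x)
    (hv' : ∀ x ∈ Icc (0:ℝ) L, HasDerivWithinAt v' (v'' x) (Icc (0:ℝ) L) x)
    (hb0 : v' 0 = 0) (hbL : v' L = 0)
    (hproj : ∀ x ∈ Icc (0:ℝ) L,
      m * (u 0 * v'' x 0 + u 1 * v'' x 1 + u 2 * v'' x 2)
        = lam * (u 0 * v x 0 + u 1 * v x 1 + u 2 * v x 2))
    (hx : ∃ x ∈ Icc (0:ℝ) L, u 0 * v x 0 + u 1 * v x 1 + u 2 * v x 2 ≠ 0) :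
    ∃ n : ℕ, lam = -((((n : ℝ) * Real.pi / L : ℝ)) : ℂ) ^ 2 * m := by
  set f : ℝ → ℂ := fun x => u 0 * v x 0 + u 1 * v x 1 + u 2 * v x 2 with hfdef
  set f' : ℝ → ℂ := fun x => u 0 * v' x 0 + u 1 * v' x 1 + u 2 * v' x 2 with hf'def
  have hdf : ∀ x ∈ Icc (0:ℝ) L, HasDerivWithinAt f (f' x) (Icc (0:ℝ) L) x := by
    intro x hx'
    exact (((comp_proj 0 (hv x hx')).const_mul (u 0)).add
      ((comp_proj 1 (hv x hx')).const_mul (u 1))).add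
      ((comp_proj 2 (hv x hx')).const_mul (u 2))
  have hdf' : ∀ x ∈ Icc (0:ℝ) L, HasDerivWithinAt f' ((lam / m) * f x) (Icc (0:ℝ) L) x := by
    intro x hx'
    have h1 : HasDerivWithinAt f' (u 0 * v'' x 0 + u 1 * v'' x 1 + u 2 * v'' x 2)
        (Icc (0:ℝ) L) x :=
      (((comp_proj 0 (hv' x hx')).const_mul (u 0)).add
        ((comp_proj 1 (hv' x hx')).const_mul (u 1))).add
        ((comp_proj 2 (hv' x hx')).const_mul (u 2))
    have hval : u 0 * v'' x 0 + u 1 * v'' x 1 + u 2 * v'' x 2 = (lam / m) * f x := by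
      rw [div_mul_eq_mul_div, eq_div_iff hm, hfdef]
      linear_combination hproj x hx'
    rwa [hval] at h1
  have hb0' : f' 0 = 0 := by simp [hf'def, hb0]
  have hbL' : f' L = 0 := by simp [hf'def, hbL]
  obtain ⟨n, hn⟩ := scalar_ode L hL (lam / m) f f' hdf hdf' hb0' hbL' hx
  exact ⟨n, by rw [div_eq_iff hm] at hn; exact hn⟩

private lemma branch_perp (L ν : ℝ) (hL : 0 < L) (a : Fin 3 → ℝ)
    (hS : ((a 0 : ℂ))^2 + ((a 1 : ℂ))^2 + ((a 2 : ℂ))^2 = 1) (lam ε : ℂ) (hε : ε ^ 2 = -1)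
    (hm : ((ν:ℝ):ℂ) - ε ≠ 0)
    (v v' v'' : ℝ → Fin 3 → ℂ)
    (hv : ∀ x ∈ Icc (0:ℝ) L, HasDerivWithinAt v (v' x) (Icc (0:ℝ) L) x)
    (hv' : ∀ x ∈ Icc (0:ℝ) L, HasDerivWithinAt v' (v'' x) (Icc (0:ℝ) L) x)
    (hb0 : v' 0 = 0) (hbL : v' L = 0)
    (hcomp : ∀ x ∈ Icc (0:ℝ) L,
      ((ν:ℂ) * v'' x 0 + ((a 1:ℂ) * v'' x 2 - (a 2:ℂ) * v'' x 1) = lam * v x 0) ∧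
      ((ν:ℂ) * v'' x 1 + ((a 2:ℂ) * v'' x 0 - (a 0:ℂ) * v'' x 2) = lam * v x 1) ∧
      ((ν:ℂ) * v'' x 2 + ((a 0:ℂ) * v'' x 1 - (a 1:ℂ) * v'' x 0) = lam * v x 2))
    (u : Fin 3 → ℂ)
    (hu : u = ![1 - (a 0:ℂ)^2, -(a 0:ℂ)*(a 1:ℂ) - ε*(a 2:ℂ), -(a 0:ℂ)*(a 2:ℂ) + ε*(a 1:ℂ)]
        ∨ u = ![-(a 1:ℂ)*(a 0:ℂ) + ε*(a 2:ℂ), 1 - (a 1:ℂ)^2, -(a 1:ℂ)*(a 2:ℂ) - ε*(a 0:ℂ)]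
        ∨ u = ![-(a 2:ℂ)*(a 0:ℂ) - ε*(a 1:ℂ), -(a 2:ℂ)*(a 1:ℂ) + ε*(a 0:ℂ), 1 - (a 2:ℂ)^2])
    (x₀ : ℝ) (hx₀I : x₀ ∈ Icc (0:ℝ) L)
    (hune : u 0 * v x₀ 0 + u 1 * v x₀ 1 + u 2 * v x₀ 2 ≠ 0) :
    ∃ n : ℕ, lam = -((((n : ℝ) * Real.pi / L : ℝ)) : ℂ) ^ 2 * (((ν:ℝ):ℂ) - ε) := by
  apply proj_ode L hL lam (((ν:ℝ):ℂ) - ε) hm u v v' v'' hv hv' hb0 hbL _ ⟨x₀, hx₀I, hune⟩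
  intro x hx
  obtain ⟨h0, h1, h2⟩ := hcomp x hx
  rcases hu with h | h | h <;> subst h <;>
    simp only [Matrix.cons_val_zero, Matrix.cons_val_one, Matrix.head_cons,
      Matrix.cons_val_two, Matrix.tail_cons]
  · linear_combination (1 - (a 0:ℂ)^2) * h0 + (-(a 0:ℂ)*(a 1:ℂ) - ε*(a 2:ℂ)) * h1
      + (-(a 0:ℂ)*(a 2:ℂ) + ε*(a 1:ℂ)) * h2 + ε * (v'' x 0) * hS
      + ((a 2:ℂ) * v'' x 1 - (a 1:ℂ) * v'' x 2) * hε
  · linear_combination (-(a 1:ℂ)*(a 0:ℂ) + ε*(a 2:ℂ)) * h0 + (1 - (a 1:ℂ)^2) * h1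
      + (-(a 1:ℂ)*(a 2:ℂ) - ε*(a 0:ℂ)) * h2 + ε * (v'' x 1) * hS
      + ((a 0:ℂ) * v'' x 2 - (a 2:ℂ) * v'' x 0) * hε
  · linear_combination (-(a 2:ℂ)*(a 0:ℂ) - ε*(a 1:ℂ)) * h0 + (-(a 2:ℂ)*(a 1:ℂ) + ε*(a 0:ℂ)) * h1
      + (1 - (a 2:ℂ)^2) * h2 + ε * (v'' x 2) * hS
      + ((a 1:ℂ) * v'' x 0 - (a 0:ℂ) * v'' x 1) * hε


/-- Every eigenvalue of the linearized Landau–Lifshitz operator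
`A v = ν v″ + a × v″` on `[0, L]` with Neumann boundary conditions is of the form
`-(nπ/L)² ν`, `-(nπ/L)² ν + i (nπ/L)²` or `-(nπ/L)² ν - i (nπ/L)²` for some `n ∈ ℕ`. -/
theorem linearized_landau_lifshitz_eigenvalues (L ν : ℝ) (hL : 0 < L) (hν : 0 < ν)
    (a : Fin 3 → ℝ) (ha : Real.sqrt (∑ i, a i ^ 2) = 1) (lam : ℂ)
    (v v' v'' : ℝ → Fin 3 → ℂ)
    (hv : ∀ x ∈ Icc (0 : ℝ) L, HasDerivWithinAt v (v' x) (Icc (0 : ℝ) L) x)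
    (hv' : ∀ x ∈ Icc (0 : ℝ) L, HasDerivWithinAt v' (v'' x) (Icc (0 : ℝ) L) x)
    (hv'' : ContinuousOn v'' (Icc (0 : ℝ) L))
    (hne : ¬ ∀ x ∈ Icc (0 : ℝ) L, v x = 0)
    (hb0 : v' 0 = 0) (hbL : v' L = 0)
    (heq : ∀ x ∈ Icc (0 : ℝ) L,
      (ν : ℂ) • v'' x + (fun i => (a i : ℂ)) ⨯₃ (v'' x) = lam • v x) :
    ∃ n : ℕ,
      lam = -((((n : ℝ) * Real.pi / L) ^ 2 * ν : ℝ) : ℂ) ∨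
      lam = -((((n : ℝ) * Real.pi / L) ^ 2 * ν : ℝ) : ℂ)
          + Complex.I * ((((n : ℝ) * Real.pi / L) ^ 2 : ℝ) : ℂ) ∨
      lam = -((((n : ℝ) * Real.pi / L) ^ 2 * ν : ℝ) : ℂ)
          - Complex.I * ((((n : ℝ) * Real.pi / L) ^ 2 : ℝ) : ℂ) := by
  have ha' : (a 0)^2 + (a 1)^2 + (a 2)^2 = 1 := by
    have := Real.sqrt_eq_one.mp ha
    simpa [Fin.sum_univ_three] using this
  have hS : ((a 0 : ℂ))^2 + ((a 1 : ℂ))^2 + ((a 2 : ℂ))^2 = 1 := by exact_mod_cast ha'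
  have hcomp : ∀ x ∈ Icc (0:ℝ) L,
      ((ν:ℂ) * v'' x 0 + ((a 1:ℂ) * v'' x 2 - (a 2:ℂ) * v'' x 1) = lam * v x 0) ∧
      ((ν:ℂ) * v'' x 1 + ((a 2:ℂ) * v'' x 0 - (a 0:ℂ) * v'' x 2) = lam * v x 1) ∧
      ((ν:ℂ) * v'' x 2 + ((a 0:ℂ) * v'' x 1 - (a 1:ℂ) * v'' x 0) = lam * v x 2) := by
    intro x hx
    have h := heq x hx
    rw [cross_apply] at h
    refine ⟨?_, ?_, ?_⟩
    · simpa using congrFun h 0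
    · simpa using congrFun h 1
    · simpa using congrFun h 2
  push_neg at hne
  obtain ⟨x₀, hx₀I, hx₀⟩ := hne
  by_cases hp : (a 0:ℂ) * v x₀ 0 + (a 1:ℂ) * v x₀ 1 + (a 2:ℂ) * v x₀ 2 = 0
  · -- transverse branch
    obtain ⟨j, hj⟩ : ∃ j, v x₀ j ≠ 0 := by
      by_contra h; push_neg at h
      exact hx₀ (funext h)
    have hmI : ((ν:ℝ):ℂ) - Complex.I ≠ 0 := by
      intro h
      have := congrArg Complex.re h
      simp at this
      exact hν.ne' this
    have hmI' : ((ν:ℝ):ℂ) - (-Complex.I) ≠ 0 := by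
      intro h
      have := congrArg Complex.re h
      simp at this
      exact hν.ne' this
    have hI2 : (Complex.I)^2 = -1 := Complex.I_sq
    have hI2' : (-Complex.I)^2 = -1 := by simp [neg_pow, Complex.I_sq]
    have finish : ∀ ε : ℂ, (ε = Complex.I ∨ ε = -Complex.I) →
        (∃ n : ℕ, lam = -((((n : ℝ) * Real.pi / L : ℝ)) : ℂ) ^ 2 * (((ν:ℝ):ℂ) - ε)) →
        ∃ n : ℕ,
          lam = -((((n : ℝ) * Real.pi / L) ^ 2 * ν : ℝ) : ℂ) ∨
          lam = -((((n : ℝ) * Real.pi / L) ^ 2 * ν : ℝ) : ℂ)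
              + Complex.I * ((((n : ℝ) * Real.pi / L) ^ 2 : ℝ) : ℂ) ∨
          lam = -((((n : ℝ) * Real.pi / L) ^ 2 * ν : ℝ) : ℂ)
              - Complex.I * ((((n : ℝ) * Real.pi / L) ^ 2 : ℝ) : ℂ) := by
      rintro ε (rfl | rfl) ⟨n, hn⟩
      · exact ⟨n, Or.inr (Or.inl (by rw [hn]; push_cast; ring))⟩
      · exact ⟨n, Or.inr (Or.inr (by rw [hn]; push_cast; ring))⟩
    fin_cases j
    · by_cases hcase :
        (1 - (a 0:ℂ)^2) * v x₀ 0 + (-(a 0:ℂ)*(a 1:ℂ) - Complex.I*(a 2:ℂ)) * v x₀ 1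
          + (-(a 0:ℂ)*(a 2:ℂ) + Complex.I*(a 1:ℂ)) * v x₀ 2 ≠ 0
      · refine finish Complex.I (Or.inl rfl)
          (branch_perp L ν hL a hS lam Complex.I hI2 hmI v v' v'' hv hv' hb0 hbL hcomp
            _ (Or.inl rfl) x₀ hx₀I ?_)
        simpa using hcase
      · push_neg at hcase
        refine finish (-Complex.I) (Or.inr rfl)
          (branch_perp L ν hL a hS lam (-Complex.I) hI2' hmI' v v' v'' hv hv' hb0 hbL hcomp
            _ (Or.inl rfl) x₀ hx₀I ?_)
        simp only [Matrix.cons_val_zero, Matrix.cons_val_one, Matrix.head_cons,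
          Matrix.cons_val_two, Matrix.tail_cons]
        intro h
        apply hj
        have h2 : (2 : ℂ) * v x₀ 0 = 0 := by linear_combination hcase + h + 2*(a 0:ℂ)*hp
        simpa using h2
    · by_cases hcase :
        (-(a 1:ℂ)*(a 0:ℂ) + Complex.I*(a 2:ℂ)) * v x₀ 0 + (1 - (a 1:ℂ)^2) * v x₀ 1
          + (-(a 1:ℂ)*(a 2:ℂ) - Complex.I*(a 0:ℂ)) * v x₀ 2 ≠ 0
      · refine finish Complex.I (Or.inl rfl)
          (branch_perp L ν hL a hS lam Complex.I hI2 hmI v v' v'' hv hv' hb0 hbL hcomp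
            _ (Or.inr (Or.inl rfl)) x₀ hx₀I ?_)
        simpa using hcase
      · push_neg at hcase
        refine finish (-Complex.I) (Or.inr rfl)
          (branch_perp L ν hL a hS lam (-Complex.I) hI2' hmI' v v' v'' hv hv' hb0 hbL hcomp
            _ (Or.inr (Or.inl rfl)) x₀ hx₀I ?_)
        simp only [Matrix.cons_val_zero, Matrix.cons_val_one, Matrix.head_cons,
          Matrix.cons_val_two, Matrix.tail_cons]
        intro h
        apply hj
        have h2 : (2 : ℂ) * v x₀ 1 = 0 := by linear_combination hcase + h + 2*(a 1:ℂ)*hp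
        simpa using h2
    · by_cases hcase :
        (-(a 2:ℂ)*(a 0:ℂ) - Complex.I*(a 1:ℂ)) * v x₀ 0 + (-(a 2:ℂ)*(a 1:ℂ) + Complex.I*(a 0:ℂ)) * v x₀ 1
          + (1 - (a 2:ℂ)^2) * v x₀ 2 ≠ 0
      · refine finish Complex.I (Or.inl rfl)
          (branch_perp L ν hL a hS lam Complex.I hI2 hmI v v' v'' hv hv' hb0 hbL hcomp
            _ (Or.inr (Or.inr rfl)) x₀ hx₀I ?_)
        simpa using hcase
      · push_neg at hcase
        refine finish (-Complex.I) (Or.inr rfl)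
          (branch_perp L ν hL a hS lam (-Complex.I) hI2' hmI' v v' v'' hv hv' hb0 hbL hcomp
            _ (Or.inr (Or.inr rfl)) x₀ hx₀I ?_)
        simp only [Matrix.cons_val_zero, Matrix.cons_val_one, Matrix.head_cons,
          Matrix.cons_val_two, Matrix.tail_cons]
        intro h
        apply hj
        have h2 : (2 : ℂ) * v x₀ 2 = 0 := by linear_combination hcase + h + 2*(a 2:ℂ)*hp
        simpa using h2
  · -- parallel branch
    have hmν : ((ν:ℝ):ℂ) ≠ 0 := by exact_mod_cast hν.ne'
    have hproj : ∀ x ∈ Icc (0:ℝ) L,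
        ((ν:ℝ):ℂ) * ((a 0:ℂ) * v'' x 0 + (a 1:ℂ) * v'' x 1 + (a 2:ℂ) * v'' x 2)
          = lam * ((a 0:ℂ) * v x 0 + (a 1:ℂ) * v x 1 + (a 2:ℂ) * v x 2) := by
      intro x hx
      obtain ⟨h0, h1, h2⟩ := hcomp x hx
      linear_combination (a 0:ℂ) * h0 + (a 1:ℂ) * h1 + (a 2:ℂ) * h2
    obtain ⟨n, hn⟩ := proj_ode L hL lam ((ν:ℝ):ℂ) hmν (fun i => (a i:ℂ)) v v' v''
      hv hv' hb0 hbL hproj ⟨x₀, hx₀I, hp⟩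
    exact ⟨n, Or.inl (by rw [hn]; push_cast; ring)⟩
end

section
/- Let L > 0, ν > 0, and a ∈ ℝ³ with ‖a‖₂ = 1. For every n ∈ ℕ and every λ ∈ { −(nπ/L)² ν, −(nπ/L)² ν + i (nπ/L)², −(nπ/L)² ν − i (nπ/L)² }, there exists a twice continuously differentiable function v : ℝ → ℂ³, not identically zero on [0, L], with v′(0) = v′(L) = 0 and ν · v″(x) + a × v″(x) = λ · v(x) for all x ∈ [0, L]. -/
open Matrix Set

lemma exists_cross_eigvec (a : Fin 3 → ℝ)
    (h : a 0 ^ 2 + a 1 ^ 2 + a 2 ^ 2 = 1) (μ : ℂ)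
    (hμ : μ = 0 ∨ μ = Complex.I ∨ μ = -Complex.I) :
    ∃ w : Fin 3 → ℂ, w ≠ 0 ∧ (fun i => (a i : ℂ)) ⨯₃ w = μ • w := by
  have hC : (a 0 : ℂ) ^ 2 + (a 1 : ℂ) ^ 2 + (a 2 : ℂ) ^ 2 = 1 := by exact_mod_cast h
  rcases hμ with rfl | rfl | rfl
  · refine ⟨fun i => (a i : ℂ), ?_, by rw [cross_self, zero_smul]⟩
    intro hwz
    have h0 : (a 0 : ℂ) = 0 := congrFun hwz 0
    have h1 : (a 1 : ℂ) = 0 := congrFun hwz 1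
    have h2 : (a 2 : ℂ) = 0 := congrFun hwz 2
    rw [h0, h1, h2] at hC; norm_num at hC
  · by_cases h0 : a 0 ^ 2 = (1 : ℝ)
    · have ha1 : a 1 = 0 := by nlinarith [sq_nonneg (a 1), sq_nonneg (a 2)]
      have ha2 : a 2 = 0 := by nlinarith [sq_nonneg (a 1), sq_nonneg (a 2)]
      have h1 : (a 1 : ℂ) = 0 := by exact_mod_cast congrArg Complex.ofReal ha1
      have h2 : (a 2 : ℂ) = 0 := by exact_mod_cast congrArg Complex.ofReal ha2
      have h0C : (a 0 : ℂ) ^ 2 = 1 := by exact_mod_cast h0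
      refine ⟨![0, 1, -Complex.I * (a 0 : ℂ)], ?_, ?_⟩
      · intro hwz
        have := congrFun hwz 1
        simp at this
      · funext i
        fin_cases i
        · simp only [cross_apply, Pi.smul_apply, smul_eq_mul]
          norm_num
          simp only [Matrix.cons_val_two, Matrix.tail_cons, Matrix.head_cons]
          linear_combination (-Complex.I * (a 0 : ℂ)) * h1 - h2
        · simp only [cross_apply, Pi.smul_apply, smul_eq_mul]
          norm_num
          simp only [Matrix.cons_val_two, Matrix.tail_cons, Matrix.head_cons]
          linear_combination Complex.I * h0C
        · simp only [cross_apply, Pi.smul_apply, smul_eq_mul]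
          norm_num
          linear_combination (a 0 : ℂ) * Complex.I_sq
    · refine ⟨![(a 0 : ℂ) ^ 2 - 1, (a 0 : ℂ) * a 1 + Complex.I * a 2,
        (a 0 : ℂ) * a 2 - Complex.I * a 1], ?_, ?_⟩
      · intro hwz
        have h00 : (a 0 : ℂ) ^ 2 - 1 = 0 := congrFun hwz 0
        have : (a 0 : ℂ) ^ 2 = 1 := by linear_combination h00
        exact h0 (by exact_mod_cast this)
      · funext i
        fin_cases i
        · simp only [cross_apply, Pi.smul_apply, smul_eq_mul]
          norm_num
          simp only [Matrix.cons_val_two, Matrix.tail_cons, Matrix.head_cons]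
          linear_combination (-Complex.I) * hC
        · simp only [cross_apply, Pi.smul_apply, smul_eq_mul]
          norm_num
          simp only [Matrix.cons_val_two, Matrix.tail_cons, Matrix.head_cons]
          linear_combination (-(a 2 : ℂ)) * Complex.I_sq
        · simp only [cross_apply, Pi.smul_apply, smul_eq_mul]
          norm_num
          linear_combination ((a 1 : ℂ)) * Complex.I_sq
  · by_cases h0 : a 0 ^ 2 = (1 : ℝ)
    · have ha1 : a 1 = 0 := by nlinarith [sq_nonneg (a 1), sq_nonneg (a 2)]
      have ha2 : a 2 = 0 := by nlinarith [sq_nonneg (a 1), sq_nonneg (a 2)]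
      have h1 : (a 1 : ℂ) = 0 := by exact_mod_cast congrArg Complex.ofReal ha1
      have h2 : (a 2 : ℂ) = 0 := by exact_mod_cast congrArg Complex.ofReal ha2
      have h0C : (a 0 : ℂ) ^ 2 = 1 := by exact_mod_cast h0
      refine ⟨![0, 1, Complex.I * (a 0 : ℂ)], ?_, ?_⟩
      · intro hwz
        have := congrFun hwz 1
        simp at this
      · funext i
        fin_cases i
        · simp only [cross_apply, Pi.smul_apply, smul_eq_mul]
          norm_num
          simp only [Matrix.cons_val_two, Matrix.tail_cons, Matrix.head_cons]
          linear_combination (Complex.I * (a 0 : ℂ)) * h1 - h2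
        · simp only [cross_apply, Pi.smul_apply, smul_eq_mul]
          norm_num
          simp only [Matrix.cons_val_two, Matrix.tail_cons, Matrix.head_cons]
          linear_combination Complex.I * h0C
        · simp only [cross_apply, Pi.smul_apply, smul_eq_mul]
          norm_num
          linear_combination (a 0 : ℂ) * Complex.I_sq
    · refine ⟨![(a 0 : ℂ) ^ 2 - 1, (a 0 : ℂ) * a 1 - Complex.I * a 2,
        (a 0 : ℂ) * a 2 + Complex.I * a 1], ?_, ?_⟩
      · intro hwz
        have h00 : (a 0 : ℂ) ^ 2 - 1 = 0 := congrFun hwz 0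
        have : (a 0 : ℂ) ^ 2 = 1 := by linear_combination h00
        exact h0 (by exact_mod_cast this)
      · funext i
        fin_cases i
        · simp only [cross_apply, Pi.smul_apply, smul_eq_mul]
          norm_num
          simp only [Matrix.cons_val_two, Matrix.tail_cons, Matrix.head_cons]
          linear_combination Complex.I * hC
        · simp only [cross_apply, Pi.smul_apply, smul_eq_mul]
          norm_num
          simp only [Matrix.cons_val_two, Matrix.tail_cons, Matrix.head_cons]
          linear_combination (-(a 2 : ℂ)) * Complex.I_sq
        · simp only [cross_apply, Pi.smul_apply, smul_eq_mul]
          norm_num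
          linear_combination ((a 1 : ℂ)) * Complex.I_sq

/-- For every `n ∈ ℕ`, each of `-(nπ/L)² ν`, `-(nπ/L)² ν + i (nπ/L)²` and
`-(nπ/L)² ν - i (nπ/L)²` is an eigenvalue of the linearized Landau–Lifshitz operator
`A v = ν v″ + a × v″` on `[0, L]` with Neumann boundary conditions. -/
theorem linearized_landau_lifshitz_eigenvalues_exist (L ν : ℝ) (hL : 0 < L) (hν : 0 < ν)
    (a : Fin 3 → ℝ) (ha : Real.sqrt (∑ i, a i ^ 2) = 1) (n : ℕ) (lam : ℂ)
    (hlam : lam = -((((n : ℝ) * Real.pi / L) ^ 2 * ν : ℝ) : ℂ) ∨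
      lam = -((((n : ℝ) * Real.pi / L) ^ 2 * ν : ℝ) : ℂ)
          + Complex.I * ((((n : ℝ) * Real.pi / L) ^ 2 : ℝ) : ℂ) ∨
      lam = -((((n : ℝ) * Real.pi / L) ^ 2 * ν : ℝ) : ℂ)
          - Complex.I * ((((n : ℝ) * Real.pi / L) ^ 2 : ℝ) : ℂ)) :
    ∃ v v' v'' : ℝ → Fin 3 → ℂ,
      (∀ x ∈ Icc (0 : ℝ) L, HasDerivWithinAt v (v' x) (Icc (0 : ℝ) L) x) ∧
      (∀ x ∈ Icc (0 : ℝ) L, HasDerivWithinAt v' (v'' x) (Icc (0 : ℝ) L) x) ∧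
      ContinuousOn v'' (Icc (0 : ℝ) L) ∧
      (¬ ∀ x ∈ Icc (0 : ℝ) L, v x = 0) ∧
      v' 0 = 0 ∧ v' L = 0 ∧
      ∀ x ∈ Icc (0 : ℝ) L,
        (ν : ℂ) • v'' x + (fun i => (a i : ℂ)) ⨯₃ (v'' x) = lam • v x := by
  have hsum : a 0 ^ 2 + a 1 ^ 2 + a 2 ^ 2 = 1 := by
    have hnn : 0 ≤ ∑ i, a i ^ 2 := Finset.sum_nonneg fun i _ => sq_nonneg _
    have h' : (∑ i, a i ^ 2) = 1 := by nlinarith [Real.sq_sqrt hnn, ha]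
    simpa [Fin.sum_univ_three] using h'
  set k : ℝ := (n : ℝ) * Real.pi / L with hk
  obtain ⟨μ, hμmem, hlam2⟩ : ∃ μ : ℂ, (μ = 0 ∨ μ = Complex.I ∨ μ = -Complex.I) ∧
      lam = -(k : ℂ) ^ 2 * ((ν : ℂ) + μ) := by
    rcases hlam with h | h | h
    · exact ⟨0, Or.inl rfl, by rw [h]; push_cast; ring⟩
    · exact ⟨-Complex.I, Or.inr (Or.inr rfl), by rw [h]; push_cast; ring⟩
    · exact ⟨Complex.I, Or.inr (Or.inl rfl), by rw [h]; push_cast; ring⟩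
  obtain ⟨w, hw0, hw⟩ := exists_cross_eigvec a hsum μ hμmem
  refine ⟨fun x => ((Real.cos (k * x) : ℝ) : ℂ) • w,
    fun x => ((-Real.sin (k * x) * k : ℝ) : ℂ) • w,
    fun x => ((-Real.cos (k * x) * k * k : ℝ) : ℂ) • w, ?_, ?_, ?_, ?_, ?_, ?_, ?_⟩
  · intro x _
    have hkx : HasDerivAt (fun y : ℝ => k * y) k x := by
      simpa using (hasDerivAt_id x).const_mul k
    exact ((hkx.cos).ofReal_comp.smul_const w).hasDerivWithinAt
  · intro x _
    have hkx : HasDerivAt (fun y : ℝ => k * y) k x := by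
      simpa using (hasDerivAt_id x).const_mul k
    have h2 : HasDerivAt (fun y : ℝ => -Real.sin (k * y) * k)
        (-Real.cos (k * x) * k * k) x := by
      have : HasDerivAt (fun y : ℝ => -Real.sin (k * y) * k) (-(Real.cos (k * x) * k) * k) x :=
        (hkx.sin.neg).mul_const k
      convert this using 1
      ring
    exact (h2.ofReal_comp.smul_const w).hasDerivWithinAt
  · apply Continuous.continuousOn
    fun_prop
  · intro hall
    apply hw0
    have := hall 0 ⟨le_refl 0, hL.le⟩
    simpa using this
  · simp
  · have hkL : k * L = (n : ℝ) * Real.pi := by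
      rw [hk]; field_simp
    funext i
    simp [hkL, Real.sin_nat_mul_pi]
  · intro x _
    show (ν : ℂ) • (((-Real.cos (k * x) * k * k : ℝ) : ℂ) • w)
        + (fun i => (a i : ℂ)) ⨯₃ (((-Real.cos (k * x) * k * k : ℝ) : ℂ) • w)
        = lam • (((Real.cos (k * x) : ℝ) : ℂ) • w)
    rw [LinearMap.map_smul, hw, smul_smul, smul_smul, smul_smul, ← add_smul]
    congr 1
    rw [hlam2]
    push_cast
    ring
end

section
/- Let L > 0, ν > 0, a ∈ ℝ³ with ‖a‖₂ = 1, and λ ∈ ℂ. If v : ℝ → ℂ³ is twice continuously differentiable on [0, L], not identically zero on [0, L], satisfies v′(0) = v′(L) = 0, and satisfies ν · v″(x) + a × v″(x) = λ · v(x) for all x ∈ [0, L], then the real part of λ is nonpositive: Re λ ≤ 0. -/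
open Matrix Set

/-- Real part of `∑ star (q i) * (ν • q + a ×₃ q) i + ∑ star (p i) * (lam • p) i`. -/
lemma crossAux_re (ν : ℝ) (a : Fin 3 → ℝ) (lam : ℂ) (p q : Fin 3 → ℂ) :
    (∑ i, (star (q i) * ((ν : ℂ) • q + (fun i => (a i : ℂ)) ⨯₃ q) i
        + star (p i) * (lam • p) i)).re
      = ν * ∑ i, Complex.normSq (q i) + lam.re * ∑ i, Complex.normSq (p i) := by
  simp only [Fin.sum_univ_three, cross_apply, Pi.add_apply, Pi.smul_apply, smul_eq_mul,
    Matrix.cons_val_zero, Matrix.cons_val_one, Matrix.head_cons, Matrix.cons_val_two,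
    Matrix.tail_cons, Complex.star_def]
  simp only [Complex.add_re, Complex.mul_re, Complex.sub_re, Complex.sub_im, Complex.add_im,
    Complex.mul_im, Complex.conj_re, Complex.conj_im, Complex.ofReal_re, Complex.ofReal_im,
    Complex.normSq_apply]
  ring

/-- A nonnegative continuous function on `[a,b]` which is positive somewhere has
positive integral. -/
lemma integral_pos_of_pos_at (f : ℝ → ℝ) (a b : ℝ) (hab : a < b)
    (hc : ContinuousOn f (Icc a b)) (hnn : ∀ x ∈ Icc a b, 0 ≤ f x)
    (x0 : ℝ) (hx0 : x0 ∈ Icc a b) (h0 : 0 < f x0) :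
    0 < ∫ x in a..b, f x := by
  obtain ⟨δ, hδ, hball⟩ := Metric.continuousWithinAt_iff.1 (hc x0 hx0) (f x0 / 2) (by linarith)
  set c := max a (x0 - δ / 2) with hc_def
  set d := min b (x0 + δ / 2) with hd_def
  have hcx : c ≤ x0 := max_le hx0.1 (by linarith)
  have hxd : x0 ≤ d := le_min hx0.2 (by linarith)
  have hac : a ≤ c := le_max_left _ _
  have hdb : d ≤ b := min_le_left _ _
  have hcd : c < d := by
    rcases lt_or_ge x0 b with h | h
    · exact lt_of_le_of_lt hcx (lt_min h (by linarith))
    · have hx0b : x0 = b := le_antisymm hx0.2 h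
      have : c < x0 := max_lt (by linarith [hx0.1, hx0b]) (by linarith)
      exact lt_of_lt_of_le this hxd
  have hsub : Icc c d ⊆ Icc a b := Icc_subset_Icc hac hdb
  have hposcd : ∀ x ∈ Icc c d, f x0 / 2 < f x := by
    intro x hx
    have hxab : x ∈ Icc a b := hsub hx
    have hdist : dist x x0 < δ := by
      rw [Real.dist_eq]
      have h1 : x0 - δ / 2 ≤ x := le_trans (le_max_right _ _) hx.1
      have h2 : x ≤ x0 + δ / 2 := le_trans hx.2 (min_le_right _ _)
      rw [abs_lt]; constructor <;> linarith
    have := hball hxab hdist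
    rw [Real.dist_eq, abs_lt] at this
    linarith [this.1]
  have hi1 : IntervalIntegrable f MeasureTheory.volume a c := by
    apply ContinuousOn.intervalIntegrable
    rw [uIcc_of_le hac]
    exact hc.mono (Icc_subset_Icc le_rfl (le_trans hcx hx0.2))
  have hi2 : IntervalIntegrable f MeasureTheory.volume c d := by
    apply ContinuousOn.intervalIntegrable
    rw [uIcc_of_le hcd.le]
    exact hc.mono hsub
  have hi3 : IntervalIntegrable f MeasureTheory.volume d b := by
    apply ContinuousOn.intervalIntegrable
    rw [uIcc_of_le hdb]
    exact hc.mono (Icc_subset_Icc (le_trans hx0.1 hxd) le_rfl)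
  have h1 : 0 ≤ ∫ x in a..c, f x :=
    intervalIntegral.integral_nonneg hac fun u hu =>
      hnn u ⟨hu.1, le_trans hu.2 (le_trans hcx hx0.2)⟩
  have h3 : 0 ≤ ∫ x in d..b, f x :=
    intervalIntegral.integral_nonneg hdb fun u hu =>
      hnn u ⟨le_trans (le_trans hx0.1 hxd) hu.1, hu.2⟩
  have h2 : 0 < ∫ x in c..d, f x := by
    apply intervalIntegral.intervalIntegral_pos_of_pos_on hi2 _ hcd
    intro x hx
    have := hposcd x ⟨hx.1.le, hx.2.le⟩
    linarith
  have hsplit : ∫ x in a..b, f x = (∫ x in a..c, f x) + (∫ x in c..d, f x)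
      + ∫ x in d..b, f x := by
    rw [intervalIntegral.integral_add_adjacent_intervals hi1 hi2,
      intervalIntegral.integral_add_adjacent_intervals (hi1.trans hi2) hi3]
  rw [hsplit]
  linarith

/-- Every eigenvalue of the linearized Landau–Lifshitz operator
`A v = ν v″ + a × v″` on `[0, L]` with Neumann boundary conditions has
nonpositive real part. -/
theorem linearized_landau_lifshitz_eigenvalues_re_nonpos (L ν : ℝ) (hL : 0 < L) (hν : 0 < ν)
    (a : Fin 3 → ℝ) (ha : Real.sqrt (∑ i, a i ^ 2) = 1) (lam : ℂ)
    (v v' v'' : ℝ → Fin 3 → ℂ)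
    (hv : ∀ x ∈ Icc (0 : ℝ) L, HasDerivWithinAt v (v' x) (Icc (0 : ℝ) L) x)
    (hv' : ∀ x ∈ Icc (0 : ℝ) L, HasDerivWithinAt v' (v'' x) (Icc (0 : ℝ) L) x)
    (hv'' : ContinuousOn v'' (Icc (0 : ℝ) L))
    (hne : ¬ ∀ x ∈ Icc (0 : ℝ) L, v x = 0)
    (hb0 : v' 0 = 0) (hbL : v' L = 0)
    (heq : ∀ x ∈ Icc (0 : ℝ) L,
      (ν : ℂ) • v'' x + (fun i => (a i : ℂ)) ⨯₃ (v'' x) = lam • v x) :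
    lam.re ≤ 0 := by
  set s : Set ℝ := Icc (0 : ℝ) L with hs
  set ac : Fin 3 → ℂ := fun i => (a i : ℂ) with hac
  -- the continuous linear map `u ↦ ν • u + a ×₃ u`
  set T : (Fin 3 → ℂ) →L[ℂ] (Fin 3 → ℂ) :=
    LinearMap.toContinuousLinearMap ((ν : ℂ) • (LinearMap.id) + crossProduct ac) with hTdef
  have hT : ∀ u, T u = (ν : ℂ) • u + ac ⨯₃ u := by
    intro u
    simp [hTdef, LinearMap.coe_toContinuousLinearMap']
  -- the scalar function whose derivative we integrate
  set G : ℝ → ℂ := fun x => ∑ i, star (v x i) * T (v' x) i with hGdef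
  set G' : ℝ → ℂ := fun x =>
    ∑ i, (star (v' x i) * T (v' x) i + star (v x i) * T (v'' x) i) with hG'def
  have hG : ∀ x ∈ s, HasDerivWithinAt G (G' x) s x := by
    intro x hx
    apply HasDerivWithinAt.fun_sum
    intro i _
    have h0 : HasDerivWithinAt (fun y => v y i) (v' x i) s x :=
      (hasDerivWithinAt_pi (E' := fun _ : Fin 3 => ℂ)).1 (hv x hx) i
    have h1 : HasDerivWithinAt (fun y => star (v y i)) (star (v' x i)) s x := h0.star
    have h2 : HasDerivWithinAt (fun y => T (v' y) i) (T (v'' x) i) s x := by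
      exact (hasDerivWithinAt_pi (E' := fun _ : Fin 3 => ℂ)).1 (((T.restrictScalars ℝ).hasFDerivAt).comp_hasDerivWithinAt x (hv' x hx)) i
    exact h1.mul h2
  have hGcont : ContinuousOn G s := fun x hx => (hG x hx).continuousWithinAt
  have hvc : ContinuousOn v s := fun x hx => (hv x hx).continuousWithinAt
  have hv'c : ContinuousOn v' s := fun x hx => (hv' x hx).continuousWithinAt
  have hG'cont : ContinuousOn G' s := by
    apply continuousOn_finset_sum
    intro i _
    exact (((continuous_apply i).comp_continuousOn hv'c).star.mul
        ((continuous_apply i).comp_continuousOn (T.continuous.comp_continuousOn hv'c))).add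
      (((continuous_apply i).comp_continuousOn hvc).star.mul
        ((continuous_apply i).comp_continuousOn (T.continuous.comp_continuousOn hv'')))
  have hG'int : IntervalIntegrable G' MeasureTheory.volume 0 L := by
    apply ContinuousOn.intervalIntegrable
    rwa [uIcc_of_le hL.le]
  -- fundamental theorem of calculus
  have hFTC : ∫ x in (0:ℝ)..L, G' x = G L - G 0 := by
    apply intervalIntegral.integral_eq_sub_of_hasDeriv_right_of_le hL.le hGcont _ hG'int
    intro x hx
    exact ((hG x (Ioo_subset_Icc_self hx)).hasDerivAt
      (Icc_mem_nhds hx.1 hx.2)).hasDerivWithinAt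
  have hG0 : G 0 = 0 := by simp [hGdef, hb0]
  have hGL : G L = 0 := by simp [hGdef, hbL]
  have hzero : ∫ x in (0:ℝ)..L, G' x = 0 := by rw [hFTC, hG0, hGL, sub_zero]
  -- the real functions
  set f0 : ℝ → ℝ := fun x => ∑ i, Complex.normSq (v x i) with hf0def
  set f1 : ℝ → ℝ := fun x => ∑ i, Complex.normSq (v' x i) with hf1def
  have hre : ∀ x ∈ s, (G' x).re = ν * f1 x + lam.re * f0 x := by
    intro x hx
    have h1 : T (v' x) = (ν : ℂ) • v' x + ac ⨯₃ v' x := hT _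
    have h2 : T (v'' x) = lam • v x := by rw [hT]; exact heq x hx
    simp only [hG'def, h1, h2]
    exact crossAux_re ν a lam (v x) (v' x)
  have hre0 : ∫ x in (0:ℝ)..L, (G' x).re = 0 := by
    have := Complex.reCLM.intervalIntegral_comp_comm hG'int (a := 0) (b := L)
    simp only [Complex.reCLM_apply] at this
    rw [this, hzero, Complex.zero_re]
  have hf0c : ContinuousOn f0 s :=
    continuousOn_finset_sum _ fun i _ =>
      Complex.continuous_normSq.comp_continuousOn ((continuous_apply i).comp_continuousOn hvc)
  have hf1c : ContinuousOn f1 s :=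
    continuousOn_finset_sum _ fun i _ =>
      Complex.continuous_normSq.comp_continuousOn ((continuous_apply i).comp_continuousOn hv'c)
  have hf0int : IntervalIntegrable f0 MeasureTheory.volume 0 L := by
    apply ContinuousOn.intervalIntegrable; rwa [uIcc_of_le hL.le]
  have hf1int : IntervalIntegrable f1 MeasureTheory.volume 0 L := by
    apply ContinuousOn.intervalIntegrable; rwa [uIcc_of_le hL.le]
  have hcongr : ∫ x in (0:ℝ)..L, (G' x).re
      = ∫ x in (0:ℝ)..L, (ν * f1 x + lam.re * f0 x) := by
    apply intervalIntegral.integral_congr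
    intro x hx
    rw [uIcc_of_le hL.le] at hx
    exact hre x hx
  have hsplit : ∫ x in (0:ℝ)..L, (ν * f1 x + lam.re * f0 x)
      = ν * (∫ x in (0:ℝ)..L, f1 x) + lam.re * ∫ x in (0:ℝ)..L, f0 x := by
    rw [intervalIntegral.integral_add (hf1int.const_mul ν) (hf0int.const_mul lam.re),
      intervalIntegral.integral_const_mul, intervalIntegral.integral_const_mul]
  have hkey : ν * (∫ x in (0:ℝ)..L, f1 x) + lam.re * (∫ x in (0:ℝ)..L, f0 x) = 0 := by
    rw [← hsplit, ← hcongr, hre0]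
  -- positivity of ∫ f0
  obtain ⟨x0, hx0s, hx0ne⟩ := by
    push_neg at hne; exact hne
  have hf0pos : 0 < f0 x0 := by
    have hex : ∃ i ∈ Finset.univ, 0 < Complex.normSq (v x0 i) := by
      by_contra hcon
      push_neg at hcon
      apply hx0ne
      funext i
      have h0 : Complex.normSq (v x0 i) = 0 :=
        le_antisymm (hcon i (Finset.mem_univ i)) (Complex.normSq_nonneg _)
      exact Complex.normSq_eq_zero.1 h0
    exact Finset.sum_pos' (fun i _ => Complex.normSq_nonneg _) hex
  have hint0pos : 0 < ∫ x in (0:ℝ)..L, f0 x :=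
    integral_pos_of_pos_at f0 0 L hL hf0c
      (fun x _ => Finset.sum_nonneg fun i _ => Complex.normSq_nonneg _) x0 hx0s hf0pos
  have hint1nn : 0 ≤ ∫ x in (0:ℝ)..L, f1 x :=
    intervalIntegral.integral_nonneg hL.le
      (fun u _ => Finset.sum_nonneg fun i _ => Complex.normSq_nonneg _)
  nlinarith
end

section
/- Let c > 0 and y₀, y₁ ∈ ℝ, and for ω > 0 define y_ω(t) = y₀ + (y₁/c)(1 − e^{−ct}) − sin(ω t)/(ω² + c²) + (ω² + c² − c² cos(ω t) − ω² e^{−ct}) / (ω c (ω² + c²)). Then: (a) for every fixed t ≥ 0, y_ω(t) tends to y₀ + (y₁/c)(1 − e^{−ct}) as ω → 0⁺; and (b) y₀ + (y₁/c)(1 − e^{−ct}) tends to y₀ + y₁/c as t → ∞. -/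
set_option maxHeartbeats 1000000


open Filter

/-- Zero-frequency limit of the solutions of `y″ + c y′ = sin ωt` with
`y(0) = y₀`, `y′(0) = y₁`: for fixed `t ≥ 0` the solution tends to
`y₀ + (y₁/c)(1 - e^{-ct})` as `ω → 0⁺`, and this limit tends to `y₀ + y₁/c`
as `t → ∞`. -/
theorem zero_frequency_limit_depends_on_initial_conditions (c y₀ y₁ : ℝ) (hc : 0 < c)
    (y : ℝ → ℝ → ℝ)
    (hy : ∀ ω, 0 < ω → ∀ t, y ω t = y₀ + y₁ / c * (1 - Real.exp (-c * t))
        - Real.sin (ω * t) / (ω ^ 2 + c ^ 2)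
        + (ω ^ 2 + c ^ 2 - c ^ 2 * Real.cos (ω * t) - ω ^ 2 * Real.exp (-c * t)) /
            (ω * c * (ω ^ 2 + c ^ 2))) :
    (∀ t, 0 ≤ t → Tendsto (fun ω => y ω t) (nhdsWithin 0 (Set.Ioi 0))
        (nhds (y₀ + y₁ / c * (1 - Real.exp (-c * t))))) ∧
      Tendsto (fun t => y₀ + y₁ / c * (1 - Real.exp (-c * t))) atTop
        (nhds (y₀ + y₁ / c)) := by
  constructor
  · intro t ht
    set A : ℝ := y₀ + y₁ / c * (1 - Real.exp (-c * t)) with hA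
    set E : ℝ := Real.exp (-c * t) with hE
    -- slope limit : (1 - cos(ω t))/ω → 0 as ω → 0 (ω ≠ 0)
    have hcos : HasDerivAt (fun ω : ℝ => 1 - Real.cos (ω * t)) 0 0 := by
      have h1 : HasDerivAt (fun ω : ℝ => ω * t) t 0 := by simpa using (hasDerivAt_id (0:ℝ)).mul_const t
      have h2 : HasDerivAt (fun ω : ℝ => Real.cos (ω * t))
          (-Real.sin (0 * t) * t) 0 := by
        have := (Real.hasDerivAt_cos (0 * t)).comp 0 h1; exact this
      have h3 := h2.const_sub 1
      simpa using h3
    have hslope : Tendsto (fun ω : ℝ => (1 - Real.cos (ω * t)) / ω)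
        (nhdsWithin 0 (Set.Ioi 0)) (nhds 0) := by
      have := hasDerivAt_iff_tendsto_slope.mp hcos
      have h' : Tendsto (slope (fun ω : ℝ => 1 - Real.cos (ω * t)) 0)
          (nhdsWithin 0 (Set.Ioi 0)) (nhds 0) :=
        this.mono_left (nhdsWithin_mono 0 (fun x hx => ne_of_gt hx))
      refine h'.congr (fun ω => ?_)
      simp [slope_def_field]
    have hc2 : (0:ℝ) < 0 ^ 2 + c ^ 2 := by positivity
    -- sin term tends to 0
    have hsin : Tendsto (fun ω : ℝ => Real.sin (ω * t) / (ω ^ 2 + c ^ 2))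
        (nhdsWithin 0 (Set.Ioi 0)) (nhds 0) := by
      have hnum : Tendsto (fun ω : ℝ => Real.sin (ω * t)) (nhds 0) (nhds 0) := by
        have : Continuous (fun ω : ℝ => Real.sin (ω * t)) := by continuity
        simpa using this.tendsto 0
      have hden : Tendsto (fun ω : ℝ => ω ^ 2 + c ^ 2) (nhds 0) (nhds (0 ^ 2 + c ^ 2)) := by
        have : Continuous (fun ω : ℝ => ω ^ 2 + c ^ 2) := by continuity
        simpa using this.tendsto 0
      have := hnum.div hden (ne_of_gt hc2)
      simpa [Pi.div_def] using this.mono_left nhdsWithin_le_nhds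
    -- the remainder term tends to 0
    have hrem : Tendsto (fun ω : ℝ => (ω * (1 - E) + c ^ 2 * ((1 - Real.cos (ω * t)) / ω)) /
        (c * (ω ^ 2 + c ^ 2))) (nhdsWithin 0 (Set.Ioi 0)) (nhds 0) := by
      have hnum : Tendsto (fun ω : ℝ => ω * (1 - E) + c ^ 2 * ((1 - Real.cos (ω * t)) / ω))
          (nhdsWithin 0 (Set.Ioi 0)) (nhds 0) := by
        have h1 : Tendsto (fun ω : ℝ => ω * (1 - E)) (nhdsWithin 0 (Set.Ioi 0)) (nhds 0) := by
          have : Continuous (fun ω : ℝ => ω * (1 - E)) := by continuity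
          simpa using (this.tendsto 0).mono_left nhdsWithin_le_nhds
        have h2 := hslope.const_mul (c ^ 2)
        simpa using h1.add h2
      have hden : Tendsto (fun ω : ℝ => c * (ω ^ 2 + c ^ 2)) (nhdsWithin 0 (Set.Ioi 0))
          (nhds (c * (0 ^ 2 + c ^ 2))) := by
        have : Continuous (fun ω : ℝ => c * (ω ^ 2 + c ^ 2)) := by continuity
        simpa using (this.tendsto 0).mono_left nhdsWithin_le_nhds
      have := hnum.div hden (by positivity)
      simpa [Pi.div_def] using this
    have key : Tendsto (fun ω : ℝ => A - Real.sin (ω * t) / (ω ^ 2 + c ^ 2)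
        + (ω * (1 - E) + c ^ 2 * ((1 - Real.cos (ω * t)) / ω)) / (c * (ω ^ 2 + c ^ 2)))
        (nhdsWithin 0 (Set.Ioi 0)) (nhds A) := by
      have h0 : Tendsto (fun _ : ℝ => A) (nhdsWithin 0 (Set.Ioi 0)) (nhds A) :=
        tendsto_const_nhds
      have := (h0.sub hsin).add hrem
      simpa using this
    refine key.congr' ?_
    filter_upwards [self_mem_nhdsWithin] with ω hω
    have hω0 : ω ≠ 0 := ne_of_gt hω
    rw [hy ω hω t, ← hE, hA]
    have hden : ω ^ 2 + c ^ 2 ≠ 0 := by positivity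
    have hc0 : c ≠ 0 := ne_of_gt hc
    field_simp
    ring
  · have hE : Tendsto (fun t : ℝ => Real.exp (-c * t)) atTop (nhds 0) := by
      apply Real.tendsto_exp_atBot.comp
      exact tendsto_id.const_mul_atTop_of_neg (neg_lt_zero.mpr hc)
    have : Tendsto (fun t : ℝ => y₀ + y₁ / c * (1 - Real.exp (-c * t))) atTop
        (nhds (y₀ + y₁ / c * (1 - 0))) :=
      tendsto_const_nhds.add ((tendsto_const_nhds.sub hE).const_mul _)
    simpa using this
end
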